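/- arXiv:2103.01131 — 4 statements merged into one kernel-verified Lean document; each statement's English description precedes it below -/
import Mathlib

section
/- For all integers N, n with 2 ≤ n ≤ N, all reals r, c, and every integer i with 1 ≤ i ≤ N−1, the payoff difference in the Public Goods Game is independent of i and equals Π_C(i) − Π_D(i) = −c·(1 − r(N−n)/(n(N−1))). -/
open Real Finset

/-- Average payoff of a cooperator in the Public Goods Game in a population of `N` players
with `i` cooperators, where groups of size `n` are sampled without replacement:
`Π_C(i) = Σ_{j=0}^{n−1} [C(i−1,j)·C(N−i,n−1−j)/C(N−1,n−1)]·((j+1)·rc/n − c)`. -/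
noncomputable def PiC (N n : ℕ) (r c : ℝ) (i : ℕ) : ℝ :=
  ∑ j ∈ Finset.range n,
    (((i - 1).choose j : ℝ) * ((N - i).choose (n - 1 - j) : ℝ) / ((N - 1).choose (n - 1) : ℝ))
      * (((j : ℝ) + 1) * r * c / (n : ℝ) - c)

/-- Average payoff of a defector in the Public Goods Game:
`Π_D(i) = Σ_{j=0}^{n−1} [C(i,j)·C(N−1−i,n−1−j)/C(N−1,n−1)]·(j·rc/n)`. -/
noncomputable def PiD (N n : ℕ) (r c : ℝ) (i : ℕ) : ℝ :=
  ∑ j ∈ Finset.range n,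
    ((i.choose j : ℝ) * ((N - 1 - i).choose (n - 1 - j) : ℝ) / ((N - 1).choose (n - 1) : ℝ))
      * ((j : ℝ) * r * c / (n : ℝ))

lemma vand (a b k : ℕ) :
    ∑ j ∈ Finset.range (k + 1), a.choose j * b.choose (k - j) = (a + b).choose k := by
  rw [Nat.add_choose_eq, Finset.Nat.sum_antidiagonal_eq_sum_range_succ_mk]

lemma key_term (a j : ℕ) : (j + 1) * a.choose (j + 1) = a * (a - 1).choose j := by
  cases a with
  | zero => simp
  | succ s => rw [Nat.succ_sub_one, Nat.add_one_mul_choose_eq, Nat.mul_comm]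

lemma mom (a b m : ℕ) :
    ∑ j ∈ Finset.range (m + 2), j * (a.choose j * b.choose (m + 1 - j)) =
      a * ((a - 1 + b).choose m) := by
  rw [Finset.sum_range_succ']
  simp only [Nat.zero_eq, Nat.choose_zero_right, zero_mul, add_zero]
  have : ∀ j ∈ Finset.range (m + 1),
      (j + 1) * (a.choose (j + 1) * b.choose (m + 1 - (j + 1))) =
      a * ((a - 1).choose j * b.choose (m - j)) := by
    intro j _
    have h : m + 1 - (j + 1) = m - j := by omega
    rw [h, ← Nat.mul_assoc, key_term, Nat.mul_assoc]
  rw [Finset.sum_congr rfl this, ← Finset.mul_sum, vand]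

set_option maxHeartbeats 1000000 in
/-- For 2 ≤ n ≤ N, all reals r, c, and every 1 ≤ i ≤ N−1, the payoff
difference in the PGG is independent of i and equals −c·(1 − r(N−n)/(n(N−1))). -/
theorem PGG_payoff_difference (N n i : ℕ) (hn : 2 ≤ n) (hnN : n ≤ N)
    (hi1 : 1 ≤ i) (hiN : i ≤ N - 1) (r c : ℝ) :
    PiC N n r c i - PiD N n r c i =
      -c * (1 - r * ((N : ℝ) - (n : ℝ)) / ((n : ℝ) * ((N : ℝ) - 1))) := by
  obtain ⟨m, rfl⟩ : ∃ m, n = m + 2 := ⟨n - 2, by omega⟩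
  obtain ⟨a, rfl⟩ : ∃ a, i = a + 1 := ⟨i - 1, by omega⟩
  obtain ⟨b, rfl⟩ : ∃ b, N = a + b + 2 := ⟨N - a - 2, by omega⟩
  have hm : m ≤ a + b := by omega
  have e1 : a + 1 - 1 = a := by omega
  have e2 : a + b + 2 - (a + 1) = b + 1 := by omega
  have e3 : m + 2 - 1 = m + 1 := by omega
  have e4 : a + b + 2 - 1 = a + b + 1 := by omega
  have e5 : a + b + 1 - (a + 1) = b := by omega
  set D : ℝ := ((a + b + 1).choose (m + 1) : ℝ) with hD
  have hDpos : 0 < (a + b + 1).choose (m + 1) := Nat.choose_pos (by omega)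
  have hD0 : D ≠ 0 := by positivity
  -- sum identities cast to ℝ
  have h1 : ∑ j ∈ Finset.range (m + 2),
      ((a.choose j : ℝ) * ((b + 1).choose (m + 1 - j) : ℝ)) = D := by
    rw [hD]
    have hv := vand a (b + 1) (m + 1)
    have : a + (b + 1) = a + b + 1 := by omega
    rw [this] at hv
    exact_mod_cast hv
  have h2 : ∑ j ∈ Finset.range (m + 2),
      (j : ℝ) * ((a.choose j : ℝ) * ((b + 1).choose (m + 1 - j) : ℝ)) =
      (a : ℝ) * ((a + b).choose m : ℝ) := by
    have := mom a (b + 1) m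
    rcases Nat.eq_zero_or_pos a with ha | ha
    · subst ha
      simp only [Nat.cast_zero, zero_mul]
      norm_cast
      simpa using this
    · have haa : a - 1 + (b + 1) = a + b := by omega
      rw [haa] at this
      norm_cast
  have h3 : ∑ j ∈ Finset.range (m + 2),
      (j : ℝ) * (((a + 1).choose j : ℝ) * ((b).choose (m + 1 - j) : ℝ)) =
      ((a : ℝ) + 1) * ((a + b).choose m : ℝ) := by
    have := mom (a + 1) b m
    have haa : a + 1 - 1 + b = a + b := by omega
    rw [haa] at this
    norm_cast
  have ePiC : PiC (a + b + 2) (m + 2) r c (a + 1) =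
      (r * c / ((m : ℝ) + 2) / D) *
        (∑ j ∈ Finset.range (m + 2),
          (j : ℝ) * ((a.choose j : ℝ) * ((b + 1).choose (m + 1 - j) : ℝ))) +
      ((r * c / ((m : ℝ) + 2) - c) / D) *
        (∑ j ∈ Finset.range (m + 2),
          (a.choose j : ℝ) * ((b + 1).choose (m + 1 - j) : ℝ)) := by
    simp only [PiC, e1, e2, e3, e4]
    rw [Finset.mul_sum, Finset.mul_sum, ← Finset.sum_add_distrib]
    refine Finset.sum_congr rfl fun j _ => ?_
    push_cast
    ring
  have ePiD : PiD (a + b + 2) (m + 2) r c (a + 1) =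
      (r * c / ((m : ℝ) + 2) / D) *
        (∑ j ∈ Finset.range (m + 2),
          (j : ℝ) * (((a + 1).choose j : ℝ) * ((b).choose (m + 1 - j) : ℝ))) := by
    simp only [PiD, e3, e4]
    simp only [e5]
    rw [Finset.mul_sum]
    refine Finset.sum_congr rfl fun j _ => ?_
    push_cast
    ring
  rw [ePiC, ePiD, h1, h2, h3]
  have hrel : ((a : ℝ) + b + 1) * ((a + b).choose m : ℝ) = D * ((m : ℝ) + 1) := by
    have := Nat.add_one_mul_choose_eq (a + b) m
    rw [hD]
    exact_mod_cast this
  have h1' : ((a : ℝ) + (b : ℝ) + 1) ≠ 0 := by positivity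
  have h2' : ((m : ℝ) + 2) ≠ 0 := by positivity
  set X : ℝ := ((a + b).choose m : ℝ) with hX
  have hXD : X / D = ((m : ℝ) + 1) / ((a : ℝ) + (b : ℝ) + 1) := by
    rw [div_eq_div_iff hD0 h1']
    linarith [hrel]
  have step1 : r * c / ((m : ℝ) + 2) / D * ((a : ℝ) * X) +
      (r * c / ((m : ℝ) + 2) - c) / D * D -
      r * c / ((m : ℝ) + 2) / D * (((a : ℝ) + 1) * X) =
      (r * c / ((m : ℝ) + 2)) * (1 - X / D) - c := by
    field_simp
    ring
  rw [step1, hXD]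
  push_cast
  rw [div_mul_eq_div_div]
  linear_combination (-(r * c) / (((m : ℝ)) + 2)) * mul_inv_cancel₀ h1'
end

section
/- For N = 3, the expected total cost of institutional reward has the closed form E_r(θ) = (9θ/4)·(5 + (4e^x − 1)/(1 + e^x + e^{2x})), where x = β(θ + δ). -/
open Real Finset Filter Topology Matrix
set_option maxHeartbeats 2000000

/-- Transition matrix `U` between the transient states of the absorbing Markov chain,
for population size `N`, selection intensity `β`, payoff difference `δ` and incentive `θ`.
The index `i : Fin (N-1)` corresponds to the state with `i+1` cooperators;
`x = β(θ+δ)` and `p_i = i(N-i)/N²`. -/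
noncomputable def Umat (N : ℕ) (β δ θ : ℝ) : Matrix (Fin (N - 1)) (Fin (N - 1)) ℝ :=
  fun i j =>
    let x : ℝ := β * (θ + δ)
    let p : ℝ := ((i : ℕ) + 1 : ℝ) * ((N : ℝ) - ((i : ℕ) + 1 : ℝ)) / (N : ℝ) ^ 2
    if (j : ℕ) = (i : ℕ) + 1 then p / (1 + Real.exp (-x))
    else if (j : ℕ) + 1 = (i : ℕ) then p / (1 + Real.exp x)
    else if j = i then 1 - p / (1 + Real.exp (-x)) - p / (1 + Real.exp x)
    else 0

/-- The fundamental matrix `𝒩 = (I - U)⁻¹` of the absorbing Markov chain. -/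
noncomputable def fund (N : ℕ) (β δ θ : ℝ) : Matrix (Fin (N - 1)) (Fin (N - 1)) ℝ :=
  (1 - Umat N β δ θ)⁻¹

/-- Expected total cost of institutional reward,
`E_r(θ) = (θ/2) Σ_{i=1}^{N-1} (n_{1,i} + n_{N-1,i}) · i`
(row `1` is index `0` and row `N-1` is index `N-2`; junk value `0` for `N < 3`). -/
noncomputable def Ereward (N : ℕ) (β δ θ : ℝ) : ℝ :=
  if h : 3 ≤ N then
    (θ / 2) * ∑ j : Fin (N - 1),
      (fund N β δ θ ⟨0, by omega⟩ j + fund N β δ θ ⟨N - 2, by omega⟩ j) * ((j : ℕ) + 1 : ℝ)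
  else 0

/-- Expected total cost of institutional punishment,
`E_p(θ) = (θ/2) Σ_{i=1}^{N-1} (n_{1,i} + n_{N-1,i}) · (N - i)`. -/
noncomputable def Epunish (N : ℕ) (β δ θ : ℝ) : ℝ :=
  if h : 3 ≤ N then
    (θ / 2) * ∑ j : Fin (N - 1),
      (fund N β δ θ ⟨0, by omega⟩ j + fund N β δ θ ⟨N - 2, by omega⟩ j)
        * ((N : ℝ) - ((j : ℕ) + 1 : ℝ))
  else 0

/-- Harmonic number `H_N = Σ_{j=1}^{N-1} 1/j`. -/
noncomputable def harmonicNum (N : ℕ) : ℝ := ∑ j ∈ Finset.range (N - 1), (1 : ℝ) / ((j : ℕ) + 1)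

/-- For N = 3, the expected total cost of institutional reward has the closed
form E_r(θ) = (9θ/4)·(5 + (4e^x − 1)/(1 + e^x + e^{2x})), where x = β(θ + δ). -/
theorem reward_cost_N3_closed_form (β δ θ : ℝ) (hβ : 0 < β) :
    Ereward 3 β δ θ =
      (9 * θ / 4) * (5 + (4 * Real.exp (β * (θ + δ)) - 1) /
        (1 + Real.exp (β * (θ + δ)) + Real.exp (2 * (β * (θ + δ))))) := by
  have hea : (0:ℝ) < 1 + Real.exp (-(β * (θ + δ))) := by positivity
  have heb : (0:ℝ) < 1 + Real.exp (β * (θ + δ)) := by positivity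
  set a : ℝ := (2/9) / (1 + Real.exp (-(β * (θ + δ)))) with ha
  set b : ℝ := (2/9) / (1 + Real.exp (β * (θ + δ))) with hb
  have ha0 : 0 < a := by positivity
  have hb0 : 0 < b := by positivity
  set d : ℝ := a^2 + a*b + b^2 with hd
  have hd0 : 0 < d := by positivity
  have hU : (1 - Umat 3 β δ θ) * (d⁻¹ • !![a+b, a; b, a+b]) = 1 := by
    ext i j
    fin_cases i <;> fin_cases j <;>
      · rw [Matrix.mul_apply, Fin.sum_univ_two]
        simp only [Umat, Matrix.mul_apply, Fin.sum_univ_two, Matrix.sub_apply,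
          Matrix.one_apply, Matrix.smul_apply, Matrix.cons_val', Matrix.cons_val_zero,
          Matrix.cons_val_one, Matrix.head_cons, Matrix.head_fin_const, Fin.isValue,
          smul_eq_mul, Matrix.cons_val_fin_one, Matrix.empty_val',
          Matrix.cons_val_zero, Matrix.head_cons]
        norm_num [ha, hb, hd]
        field_simp
        ring
  have hfund : fund 3 β δ θ = d⁻¹ • !![a+b, a; b, a+b] := by
    rw [fund, Matrix.inv_eq_right_inv hU]
  have h3 : (3:ℕ) - 2 = 1 := rfl
  rw [Ereward, dif_pos (by norm_num)]
  rw [hfund]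
  simp only [Fin.sum_univ_two, Matrix.smul_apply, Matrix.cons_val', Matrix.cons_val_zero,
    Matrix.cons_val_one, Matrix.head_cons, Matrix.head_fin_const, smul_eq_mul,
    Matrix.cons_val_fin_one, Matrix.empty_val']
  rw [Fin.sum_univ_two (f := fun x : Fin (3-1) =>
    (d⁻¹ * !![a + b, a; b, a + b] ⟨0, by omega⟩ x + d⁻¹ * !![a + b, a; b, a + b] ⟨3 - 2, by omega⟩ x) * ((x:ℕ) + 1 : ℝ))]
  have e0 : (⟨0, by omega⟩ : Fin (3-1)) = 0 := rfl
  have e1 : (⟨3-2, by omega⟩ : Fin (3-1)) = 1 := rfl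
  rw [e0, e1]
  have h2 : Real.exp (2*(β*(θ+δ))) = Real.exp (β*(θ+δ))^2 := by
    rw [two_mul, Real.exp_add]; ring
  have hneg : Real.exp (-(β*(θ+δ))) = (Real.exp (β*(θ+δ)))⁻¹ := Real.exp_neg _
  have he : 0 < Real.exp (β*(θ+δ)) := Real.exp_pos _
  have hq : (0:ℝ) < 1 + Real.exp (β*(θ+δ)) + Real.exp (β*(θ+δ))^2 := by positivity
  have g00 : (!![a+b,a;b,a+b] : Matrix (Fin (3-1)) (Fin (3-1)) ℝ) 0 0 = a + b := rfl
  have g01 : (!![a+b,a;b,a+b] : Matrix (Fin (3-1)) (Fin (3-1)) ℝ) 0 1 = a := rfl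
  have g10 : (!![a+b,a;b,a+b] : Matrix (Fin (3-1)) (Fin (3-1)) ℝ) 1 0 = b := rfl
  have g11 : (!![a+b,a;b,a+b] : Matrix (Fin (3-1)) (Fin (3-1)) ℝ) 1 1 = a + b := rfl
  have v0 : ((0 : Fin (3-1)) : ℕ) = 0 := rfl
  have v1 : ((1 : Fin (3-1)) : ℕ) = 1 := rfl
  rw [g00, g01, g10, g11, v0, v1]
  rw [hd, ha, hb, hneg] ; rw [h2]
  have hiq : (1 : ℝ) + (Real.exp (β*(θ+δ)))⁻¹ ≠ 0 := by positivity
  field_simp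
  ring
end

section
/- For N = 3, the expected total cost of institutional punishment has the closed form E_p(θ) = (9θ/4)·(4 + (5e^x + 1)/(1 + e^x + e^{2x})), where x = β(θ + δ). -/
open Real Finset Filter Topology Matrix

/-- For N = 3, the expected total cost of institutional punishment has the
closed form E_p(θ) = (9θ/4)·(4 + (5e^x + 1)/(1 + e^x + e^{2x})), where x = β(θ + δ). -/
theorem punishment_cost_N3_closed_form (β δ θ : ℝ) (hβ : 0 < β) :
    Epunish 3 β δ θ =
      (9 * θ / 4) * (4 + (5 * Real.exp (β * (θ + δ)) + 1) /
        (1 + Real.exp (β * (θ + δ)) + Real.exp (2 * (β * (θ + δ))))) := by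
  set x : ℝ := β * (θ + δ) with hx
  set e : ℝ := Real.exp x with he
  have he0 : 0 < e := Real.exp_pos x
  have h1e : (1 : ℝ) + e ≠ 0 := by positivity
  have hiq : (1 : ℝ) + e + e^2 ≠ 0 := by positivity
  have hinv : Real.exp (-x) = e⁻¹ := by rw [Real.exp_neg]
  have hden : (1 : ℝ) + e⁻¹ ≠ 0 := by positivity
  have h2 : Real.exp (2 * x) = e ^ 2 := by
    rw [two_mul, Real.exp_add]; ring
  -- explicit inverse
  set B : Matrix (Fin 2) (Fin 2) ℝ :=
    !![(9/2) * (1+e)^2 / (1+e+e^2), (9/2) * (e*(1+e)) / (1+e+e^2);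
       (9/2) * (1+e) / (1+e+e^2), (9/2) * (1+e)^2 / (1+e+e^2)] with hB
  have hMB : (1 - Umat 3 β δ θ) * B = 1 := by
    ext i j
    fin_cases i <;> fin_cases j <;>
      · simp [Umat, Matrix.mul_apply, Fin.sum_univ_two, hB, Matrix.one_apply, hinv, ← hx, Real.exp_neg, ← he]
        field_simp
        ring
  have hfund : fund 3 β δ θ = B := Matrix.inv_eq_right_inv hMB
  rw [Epunish]
  rw [dif_pos (by norm_num)]
  rw [hfund]
  rw [Fin.sum_univ_two]
  simp [hB, h2]
  field_simp
  ring
end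

section
/- Consider the N = 3 institutional reward cost E_r as a function of θ ∈ ℝ, for fixed β > 0 and δ ∈ ℝ. If −βδ > F*, then the equation F(u) = −βδ has exactly two solutions u_1 < u_2 in {u > 0 : P(u) > 0}, both greater than (1+√21)/4, and for every θ ∈ ℝ with u = e^{β(θ+δ)}: E_r'(θ) > 0 if u < u_1, E_r'(θ) < 0 if u_1 < u < u_2, and E_r'(θ) > 0 if u > u_2; hence E_r is increasing for θ < θ_1, decreasing for θ_1 < θ < θ_2 and increasing for θ > θ_2, where θ_k = (log u_k)/β − δ. -/
open Real Finset Filter Topology Matrix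

/-- Auxiliary polynomial for the N = 3 institutional reward case: `P(u) = 4u² − 2u − 5`
(whose unique positive root is `(1+√21)/4`). -/
noncomputable def Pfun (u : ℝ) : ℝ := 4 * u ^ 2 - 2 * u - 5

/-- Auxiliary function for the N = 3 institutional reward case:
`F(u) = (u+1)(5u+4)(u²+u+1)/(u(4u²−2u−5)) − log u`. -/
noncomputable def Ffun (u : ℝ) : ℝ :=
  (u + 1) * (5 * u + 4) * (u ^ 2 + u + 1) / (u * (4 * u ^ 2 - 2 * u - 5)) - Real.log u

/-- `F* = inf {F(u) : u > 0, P(u) > 0}`. -/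
noncomputable def Fstar : ℝ := sInf {y : ℝ | ∃ u : ℝ, 0 < u ∧ 0 < Pfun u ∧ y = Ffun u}

/-- explicit fundamental matrix for N = 3 -/
noncomputable def Mex (β δ θ : ℝ) : Matrix (Fin 2) (Fin 2) ℝ :=
  let u : ℝ := Real.exp (β * (θ + δ))
  let S : ℝ := u ^ 2 + u + 1
  ![![9 / 2 * (1 + u) ^ 2 / S, 9 / 2 * (1 + u) * u / S],
    ![9 / 2 * (1 + u) / S, 9 / 2 * (1 + u) ^ 2 / S]]

lemma fund3 (β δ θ : ℝ) : fund 3 β δ θ = Mex β δ θ := by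
  have hu : (0:ℝ) < Real.exp (β * (θ + δ)) := Real.exp_pos _
  set u : ℝ := Real.exp (β * (θ + δ)) with hud
  have hS : u ^ 2 + u + 1 ≠ 0 := by positivity
  have h1u : 1 + u ≠ 0 := by positivity
  have hinv : Real.exp (-(β * (θ + δ))) = u⁻¹ := by
    rw [Real.exp_neg]
  apply Matrix.inv_eq_right_inv
  ext i j
  rw [Matrix.mul_apply]
  fin_cases i <;> fin_cases j <;>
    simp [Matrix.mul_apply, Fin.sum_univ_two, Umat, Mex, Matrix.one_apply, hinv] <;>
    field_simp <;> ring

lemma Ereward3 (β δ θ : ℝ) : Ereward 3 β δ θ =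
    9 * θ / 4 * ((Real.exp (β * (θ + δ)) + 1) * (5 * Real.exp (β * (θ + δ)) + 4) /
      (Real.exp (β * (θ + δ)) ^ 2 + Real.exp (β * (θ + δ)) + 1)) := by
  have hu : (0:ℝ) < Real.exp (β * (θ + δ)) := Real.exp_pos _
  set u : ℝ := Real.exp (β * (θ + δ)) with hud
  have hS : u ^ 2 + u + 1 ≠ 0 := by positivity
  rw [Ereward, dif_pos (by norm_num), fund3]
  simp [Fin.sum_univ_two, Mex]
  field_simp
  ring

lemma hasDeriv_Er (β δ θ : ℝ) : HasDerivAt (fun t => Ereward 3 β δ t)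
    (9 * ((Real.exp (β * (θ + δ)) + 1) * (5 * Real.exp (β * (θ + δ)) + 4) *
        (Real.exp (β * (θ + δ)) ^ 2 + Real.exp (β * (θ + δ)) + 1)
      - β * θ * Real.exp (β * (θ + δ)) *
        (4 * Real.exp (β * (θ + δ)) ^ 2 - 2 * Real.exp (β * (θ + δ)) - 5)) /
      (4 * (Real.exp (β * (θ + δ)) ^ 2 + Real.exp (β * (θ + δ)) + 1) ^ 2)) θ := by
  have hfe : (fun t => Ereward 3 β δ t) = fun t =>
      9 * t / 4 * ((Real.exp (β * (t + δ)) + 1) * (5 * Real.exp (β * (t + δ)) + 4) /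
      (Real.exp (β * (t + δ)) ^ 2 + Real.exp (β * (t + δ)) + 1)) := by
    funext t; exact Ereward3 β δ t
  rw [hfe]
  have hu : (0:ℝ) < Real.exp (β * (θ + δ)) := Real.exp_pos _
  set u : ℝ := Real.exp (β * (θ + δ)) with hud
  have hS : u ^ 2 + u + 1 ≠ 0 := by positivity
  have h1 : HasDerivAt (fun t : ℝ => β * (t + δ)) β θ := by
    simpa using ((hasDerivAt_id θ).add_const δ).const_mul β
  have he : HasDerivAt (fun t => Real.exp (β * (t + δ))) (u * β) θ := h1.exp
  have hnum : HasDerivAt (fun t => (Real.exp (β * (t + δ)) + 1) * (5 * Real.exp (β * (t + δ)) + 4))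
      ((u * β) * (5 * u + 4) + (u + 1) * (5 * (u * β))) θ :=
    (he.add_const 1).mul ((he.const_mul 5).add_const 4)
  have hden : HasDerivAt (fun t => Real.exp (β * (t + δ)) ^ 2 + Real.exp (β * (t + δ)) + 1)
      ((2 : ℕ) * u ^ (2-1) * (u * β) + u * β) θ := by
    simpa using ((he.pow 2).add he).add_const 1
  have hq := hnum.div hden hS
  have hlin : HasDerivAt (fun t : ℝ => 9 * t / 4) (9 / 4) θ := by
    simpa using ((hasDerivAt_id θ).const_mul (9:ℝ)).div_const 4
  have := (hlin.mul hq)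
  simp only [Pi.mul_def, Pi.div_def] at this
  refine this.congr_deriv ?_
  field_simp
  ring

noncomputable def N1 (u : ℝ) : ℝ :=
  20*u^6 - 36*u^5 - 159*u^4 - 208*u^3 - 132*u^2 - 9*u + 20

lemma sqrt21_lb : (4.4:ℝ) < Real.sqrt 21 := by
  have : (4.4:ℝ) = Real.sqrt (4.4^2) := by rw [Real.sqrt_sq]; norm_num
  rw [this]; apply Real.sqrt_lt_sqrt (by positivity); norm_num

lemma sqrt21_ub : Real.sqrt 21 < 4.6 := by
  have : (4.6:ℝ) = Real.sqrt (4.6^2) := by rw [Real.sqrt_sq]; norm_num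
  rw [this]; apply Real.sqrt_lt_sqrt (by norm_num); norm_num

lemma r_gt : (27/20 : ℝ) < (1 + Real.sqrt 21)/4 := by
  have := sqrt21_lb; nlinarith

lemma r_lt : ((1 + Real.sqrt 21)/4 : ℝ) < 7/5 := by
  have := sqrt21_ub; nlinarith

lemma P_factor (u : ℝ) : Pfun u = 4 * (u - (1 + Real.sqrt 21)/4) * (u - (1 - Real.sqrt 21)/4) := by
  have h : Real.sqrt 21 ^ 2 = 21 := Real.sq_sqrt (by norm_num)
  unfold Pfun; nlinarith [h]

lemma root_lt_of_P_pos {u : ℝ} (hu : 0 < u) (hP : 0 < Pfun u) : (1 + Real.sqrt 21)/4 < u := by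
  have h := P_factor u
  have hs := sqrt21_lb
  nlinarith [h]

lemma P_pos_of_root_lt {u : ℝ} (hu : (1 + Real.sqrt 21)/4 < u) : 0 < Pfun u := by
  have h := P_factor u
  have hs := sqrt21_lb
  nlinarith [h]

lemma hasDeriv_F {u : ℝ} (hu : 0 < u) (hP : Pfun u ≠ 0) :
    HasDerivAt Ffun (N1 u / (u^2 * (Pfun u)^2)) u := by
  have hd0 : u * (4 * u ^ 2 - 2 * u - 5) ≠ 0 := by
    intro h; apply hP; unfold Pfun
    rcases mul_eq_zero.1 h with h | h
    · exact absurd h (ne_of_gt hu)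
    · linarith [h]
  have hn : HasDerivAt (fun v : ℝ => (v + 1) * (5 * v + 4) * (v ^ 2 + v + 1))
      ((1 * (5*u+4) + (u+1)*5) * (u^2+u+1) + (u+1)*(5*u+4) * ((2:ℕ)*u^(2-1)*1 + 1 + 0)) u := by
    have h1 : HasDerivAt (fun v : ℝ => (v + 1) * (5 * v + 4)) (1 * (5*u+4) + (u+1)*5) u := by
      simpa [Pi.mul_def] using ((hasDerivAt_id u).add_const 1).mul (((hasDerivAt_id u).const_mul 5).add_const 4)
    have h2 : HasDerivAt (fun v : ℝ => v ^ 2 + v + 1) ((2:ℕ)*u^(2-1)*1 + 1 + 0) u := by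
      simpa using (((hasDerivAt_id u).pow 2).add (hasDerivAt_id u)).add_const 1
    exact h1.mul h2
  have hdn : HasDerivAt (fun v : ℝ => v * (4 * v ^ 2 - 2 * v - 5))
      (1 * (4*u^2-2*u-5) + u * (4*((2:ℕ)*u^(2-1)*1) - 2 - 0)) u := by
    have h2 : HasDerivAt (fun v : ℝ => 4 * v ^ 2 - 2 * v - 5) (4*((2:ℕ)*u^(2-1)*1) - 2 - 0) u := by
      simpa using ((((hasDerivAt_id u).pow 2).const_mul 4).sub
        ((hasDerivAt_id u).const_mul 2)).sub_const 5
    exact (hasDerivAt_id u).mul h2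
  have := (hn.div hdn hd0).sub (Real.hasDerivAt_log (ne_of_gt hu))
  simp only [Pi.div_def, Pi.sub_def] at this
  refine this.congr_deriv ?_
  have hP' : (4 * u ^ 2 - 2 * u - 5) ≠ 0 := fun h => hP (by unfold Pfun; linarith)
  have hu0 : u ≠ 0 := ne_of_gt hu
  have hP'' : u * (u * 4 - 2) - 5 ≠ 0 := fun h => hP' (by linear_combination h)
  unfold N1 Pfun
  field_simp
  ring

lemma dN1_pos {x : ℝ} (hx : 4 ≤ x) :
    0 < 120*x^5 - 180*x^4 - 636*x^3 - 624*x^2 - 264*x - 9 := by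
  nlinarith [pow_pos (by linarith : (0:ℝ) < x) 5, pow_pos (by linarith : (0:ℝ) < x) 4,
    pow_pos (by linarith : (0:ℝ) < x) 3, sq_nonneg x, mul_pos (by linarith : (0:ℝ) < x) (by linarith : (0:ℝ) < x),
    mul_nonneg (mul_nonneg (sub_nonneg.2 hx) (sub_nonneg.2 hx)) (sq_nonneg x),
    mul_nonneg (sub_nonneg.2 hx) (pow_nonneg (by linarith : (0:ℝ) ≤ x) 4),
    mul_nonneg (sub_nonneg.2 hx) (pow_nonneg (by linarith : (0:ℝ) ≤ x) 3),
    mul_nonneg (sub_nonneg.2 hx) (sq_nonneg x),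
    mul_nonneg (sub_nonneg.2 hx) (by linarith : (0:ℝ) ≤ x)]

lemma N1_neg_mid {x : ℝ} (h1 : 27/20 ≤ x) (h2 : x ≤ 4) : N1 x < 0 := by
  unfold N1
  nlinarith [mul_nonneg (sub_nonneg.2 h1) (sub_nonneg.2 h2),
    mul_nonneg (mul_nonneg (sub_nonneg.2 h1) (sub_nonneg.2 h2)) (sq_nonneg x),
    mul_nonneg (mul_nonneg (sub_nonneg.2 h1) (sub_nonneg.2 h2)) (pow_nonneg (by linarith : (0:ℝ) ≤ x) 4),
    mul_nonneg (mul_nonneg (sub_nonneg.2 h1) (sub_nonneg.2 h2)) (pow_nonneg (by linarith : (0:ℝ) ≤ x) 3),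
    mul_nonneg (mul_nonneg (sub_nonneg.2 h1) (sub_nonneg.2 h2)) (by linarith : (0:ℝ) ≤ x),
    sq_nonneg (x - 27/20), sq_nonneg (x-4), sq_nonneg x]

lemma N1_cont : Continuous N1 := by unfold N1; continuity

lemma hasDeriv_N1 (x : ℝ) : HasDerivAt N1 (120*x^5 - 180*x^4 - 636*x^3 - 624*x^2 - 264*x - 9) x := by
  unfold N1
  have h : HasDerivAt (fun v : ℝ => 20*v^6 - 36*v^5 - 159*v^4 - 208*v^3 - 132*v^2 - 9*v + 20)
      (20*((6:ℕ)*x^(6-1)*1) - 36*((5:ℕ)*x^(5-1)*1) - 159*((4:ℕ)*x^(4-1)*1) - 208*((3:ℕ)*x^(3-1)*1)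
        - 132*((2:ℕ)*x^(2-1)*1) - 9*1 + 0) x := by
    simpa using (((((((((hasDerivAt_id x).pow 6).const_mul 20).sub (((hasDerivAt_id x).pow 5).const_mul 36)).sub
      (((hasDerivAt_id x).pow 4).const_mul 159)).sub (((hasDerivAt_id x).pow 3).const_mul 208)).sub
      (((hasDerivAt_id x).pow 2).const_mul 132)).sub ((hasDerivAt_id x).const_mul 9)).add_const 20)
  convert h using 1; push_cast; ring

lemma N1_mono : StrictMonoOn N1 (Set.Ici (4:ℝ)) := by
  apply strictMonoOn_of_deriv_pos (convex_Ici 4) N1_cont.continuousOn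
  intro x hx
  rw [interior_Ici] at hx
  rw [(hasDeriv_N1 x).deriv]
  exact dN1_pos (le_of_lt hx)

lemma exists_m : ∃ m : ℝ, 4 < m ∧ m < 9/2 ∧ N1 m = 0 := by
  have h4 : N1 4 < 0 := by unfold N1; norm_num
  have h45 : 0 < N1 (9/2) := by unfold N1; norm_num
  have := intermediate_value_Icc (by norm_num : (4:ℝ) ≤ 9/2) N1_cont.continuousOn
  have h0 : (0:ℝ) ∈ Set.Icc (N1 4) (N1 (9/2)) := ⟨le_of_lt h4, le_of_lt h45⟩
  obtain ⟨m, hm, hm0⟩ := this h0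
  refine ⟨m, ?_, ?_, hm0⟩
  · rcases lt_or_eq_of_le hm.1 with h | h
    · exact h
    · rw [← h] at hm0; linarith
  · rcases lt_or_eq_of_le hm.2 with h | h
    · exact h
    · rw [h] at hm0; linarith

lemma F_gt_one {u : ℝ} (hu : (1 + Real.sqrt 21)/4 < u) : 1 < Ffun u := by
  have hr := r_gt
  have hu1 : (1:ℝ) < u := by linarith
  have hP : 0 < Pfun u := P_pos_of_root_lt hu
  have hP' : (0:ℝ) < 4 * u ^ 2 - 2 * u - 5 := hP
  have hu0 : (0:ℝ) < u := by linarith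
  have hlog : Real.log u < u - 1 := Real.log_lt_sub_one_of_pos hu0 (by linarith)
  have hdiv : u < (u + 1) * (5 * u + 4) * (u ^ 2 + u + 1) / (u * (4 * u ^ 2 - 2 * u - 5)) := by
    rw [lt_div_iff₀ (by positivity)]
    nlinarith
  unfold Ffun; linarith

lemma F_gt_quarter {u : ℝ} (hu : (1 + Real.sqrt 21)/4 < u) : u/4 + 1 < Ffun u := by
  have hr := r_gt
  have hP : 0 < Pfun u := P_pos_of_root_lt hu
  have hP' : (0:ℝ) < 4 * u ^ 2 - 2 * u - 5 := hP
  have hu0 : (0:ℝ) < u := by linarith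
  have hlog : Real.log u < u - 1 := Real.log_lt_sub_one_of_pos hu0 (by linarith)
  have hdiv : 5*u/4 < (u + 1) * (5 * u + 4) * (u ^ 2 + u + 1) / (u * (4 * u ^ 2 - 2 * u - 5)) := by
    rw [lt_div_iff₀ (by positivity)]
    nlinarith
  unfold Ffun; linarith

lemma Fstar_set_nonempty : {y : ℝ | ∃ u : ℝ, 0 < u ∧ 0 < Pfun u ∧ y = Ffun u}.Nonempty :=
  ⟨Ffun 2, 2, by norm_num, by norm_num [Pfun], rfl⟩

lemma Fstar_ge_one : 1 ≤ Fstar := by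
  apply le_csInf Fstar_set_nonempty
  rintro y ⟨u, hu, hP, rfl⟩
  exact le_of_lt (F_gt_one (root_lt_of_P_pos hu hP))

lemma F_contAt {u : ℝ} (hu : (1 + Real.sqrt 21)/4 < u) : ContinuousAt Ffun u := by
  have hP := P_pos_of_root_lt hu
  exact (hasDeriv_F (by linarith [r_gt]) (ne_of_gt hP)).continuousAt

lemma F_anti {m : ℝ} (hm4 : 4 < m) (hmN : N1 m = 0) :
    StrictAntiOn Ffun (Set.Ioc ((1 + Real.sqrt 21)/4) m) := by
  have hr := r_gt
  apply strictAntiOn_of_deriv_neg (convex_Ioc _ _)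
  · exact fun x hx => (F_contAt hx.1).continuousWithinAt
  · intro x hx
    rw [interior_Ioc] at hx
    have hx0 : (0:ℝ) < x := by linarith [hx.1]
    have hP : 0 < Pfun x := P_pos_of_root_lt hx.1
    rw [(hasDeriv_F hx0 (ne_of_gt hP)).deriv]
    apply div_neg_of_neg_of_pos _ (by positivity)
    rcases le_or_gt x 4 with h4 | h4
    · exact N1_neg_mid (by linarith [hx.1]) h4
    · have := N1_mono (Set.mem_Ici.2 (le_of_lt h4)) (Set.mem_Ici.2 (by linarith [hx.2]))
        hx.2
      linarith [hmN ▸ this]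

lemma F_mono {m : ℝ} (hm4 : 4 < m) (hmN : N1 m = 0) :
    StrictMonoOn Ffun (Set.Ici m) := by
  have hr := r_lt
  apply strictMonoOn_of_deriv_pos (convex_Ici _)
  · exact fun x hx => (F_contAt (by simp only [Set.mem_Ici] at hx; linarith)).continuousWithinAt
  · intro x hx
    rw [interior_Ici] at hx
    have hx0 : (0:ℝ) < x := by linarith [Set.mem_Ioi.1 hx]
    have hP : 0 < Pfun x := P_pos_of_root_lt (by linarith [Set.mem_Ioi.1 hx])
    rw [(hasDeriv_F hx0 (ne_of_gt hP)).deriv]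
    apply div_pos _ (by positivity)
    have := N1_mono (Set.mem_Ici.2 (le_of_lt hm4)) (Set.mem_Ici.2 (by linarith [Set.mem_Ioi.1 hx]))
      (Set.mem_Ioi.1 hx)
    linarith [hmN ▸ this]

set_option maxHeartbeats 1000000 in
lemma key_exists {c : ℝ} (hc : Fstar < c) :
    ∃ u1 u2 : ℝ, u1 < u2 ∧ (1 + Real.sqrt 21)/4 < u1 ∧ (1 + Real.sqrt 21)/4 < u2 ∧
      Ffun u1 = c ∧ Ffun u2 = c ∧
      (∀ u, (1 + Real.sqrt 21)/4 < u → Ffun u = c → u = u1 ∨ u = u2) ∧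
      (∀ u, (1 + Real.sqrt 21)/4 < u → u < u1 → c < Ffun u) ∧
      (∀ u, u1 < u → u < u2 → Ffun u < c) ∧
      (∀ u, u2 < u → c < Ffun u) := by
  set r : ℝ := (1 + Real.sqrt 21)/4 with hrdef
  have hrg := r_gt
  have hrl := r_lt
  have hc1 : 1 < c := lt_of_le_of_lt Fstar_ge_one hc
  obtain ⟨m, hm4, hm45, hmN⟩ := exists_m
  have hanti := F_anti hm4 hmN
  have hmono := F_mono hm4 hmN
  -- a point where F < c
  obtain ⟨y, ⟨us, hus0, husP, rfl⟩, hy⟩ := exists_lt_of_csInf_lt Fstar_set_nonempty hc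
  have husr : r < us := root_lt_of_P_pos hus0 husP
  -- F m < c
  have hFm : Ffun m < c := by
    rcases lt_trichotomy us m with h | h | h
    · have := hanti ⟨husr, h.le⟩ ⟨by linarith, le_refl m⟩ h
      linarith
    · rw [← h]; exact hy
    · exact lt_trans (hmono (Set.mem_Ici.2 (le_refl m)) (Set.mem_Ici.2 h.le) h) hy
  -- left point a with F a > c
  set t : ℝ := 1/(8*(c+3)) with htdef
  have ht0 : 0 < t := by positivity
  have ht32 : t ≤ 1/32 := by
    rw [htdef, div_le_div_iff₀ (by positivity) (by norm_num)]
    linarith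
  set a : ℝ := r + t with hadef
  have hra : r < a := by linarith
  have ha2 : a < 2 := by rw [hadef]; linarith
  have ham : a < m := by linarith
  have hFa : c < Ffun a := by
    have ha0 : (0:ℝ) < a := by linarith
    have hPa : 0 < Pfun a := P_pos_of_root_lt hra
    have hPa' : (0:ℝ) < 4*a^2 - 2*a - 5 := hPa
    -- a * P a ≤ 32 t
    have hs1 := sqrt21_lb
    have hs2 := sqrt21_ub
    have hPa2 : 4*a^2 - 2*a - 5 = 4 * t * (a - (1 - Real.sqrt 21)/4) := by
      have hfac := P_factor a
      unfold Pfun at hfac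
      rw [hfac, hadef, hrdef]; ring
    have haP : a * (4*a^2 - 2*a - 5) ≤ 32 * t := by
      rw [hPa2]
      have hX0 : (0:ℝ) ≤ a - (1 - Real.sqrt 21)/4 := by nlinarith
      have hX4 : a - (1 - Real.sqrt 21)/4 ≤ 4 := by nlinarith
      have key : a * (a - (1 - Real.sqrt 21)/4) ≤ 8 :=
        le_trans (mul_le_mul ha2.le hX4 hX0 (by norm_num)) (by norm_num)
      nlinarith [mul_le_mul_of_nonneg_left key ht0.le]
    have hdiv : c + 3 ≤ 4 / (a * (4*a^2 - 2*a - 5)) := by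
      rw [le_div_iff₀ (by positivity)]
      calc (c+3) * (a * (4*a^2 - 2*a - 5)) ≤ (c+3) * (32*t) :=
            mul_le_mul_of_nonneg_left haP (by linarith)
        _ = 4 := by rw [htdef]; field_simp; ring
    clear_value t a
    have hQS : 4 ≤ (a + 1) * (5*a + 4) * (a^2 + a + 1) := by nlinarith
    have hdiv2 : 4 / (a * (4*a^2 - 2*a - 5)) ≤
        (a + 1) * (5*a + 4) * (a^2 + a + 1) / (a * (4*a^2 - 2*a - 5)) :=
      (div_le_div_iff_of_pos_right (by positivity)).mpr hQS
    have hlog : Real.log a < 1 := by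
      have := Real.log_lt_sub_one_of_pos ha0 (by nlinarith)
      linarith
    unfold Ffun
    calc c < c + 3 - 1 - 1 := by linarith
      _ < (a + 1) * (5*a + 4) * (a^2 + a + 1) / (a * (4*a^2 - 2*a - 5)) - Real.log a := by
          linarith [hdiv.trans hdiv2]
  -- right point b with F b > c
  set b : ℝ := 4*c + 5 with hbdef
  have hmb : m < b := by linarith
  have hFb : c < Ffun b := by
    have := F_gt_quarter (show r < b by linarith)
    linarith
  -- u1 by IVT on [a, m]
  have hcontam : ContinuousOn Ffun (Set.Icc a m) :=
    fun x hx => (F_contAt (by linarith [hx.1] : r < x)).continuousWithinAt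
  have hIcc1 := intermediate_value_Icc' (le_of_lt ham) hcontam
  obtain ⟨u1, hu1mem, hu1⟩ := hIcc1 ⟨le_of_lt hFm, le_of_lt hFa⟩
  have hu1a : a < u1 := lt_of_le_of_ne hu1mem.1 (fun h => by rw [← h] at hu1; linarith)
  have hu1m : u1 < m := lt_of_le_of_ne hu1mem.2 (fun h => by rw [h] at hu1; linarith)
  have hru1 : r < u1 := by linarith
  -- u2 by IVT on [m, b]
  have hcontmb : ContinuousOn Ffun (Set.Icc m b) :=
    fun x hx => (F_contAt (by linarith [hx.1] : r < x)).continuousWithinAt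
  have hIcc2 := intermediate_value_Icc (le_of_lt hmb) hcontmb
  obtain ⟨u2, hu2mem, hu2⟩ := hIcc2 ⟨le_of_lt hFm, le_of_lt hFb⟩
  have hu2m : m < u2 := lt_of_le_of_ne hu2mem.1 (fun h => by rw [← h] at hu2; linarith)
  have hru2 : r < u2 := by linarith
  refine ⟨u1, u2, by linarith, hru1, hru2, hu1, hu2, ?_, ?_, ?_, ?_⟩
  · -- uniqueness
    intro u hru hu
    rcases le_or_gt u m with h | h
    · left
      exact hanti.injOn ⟨hru, h⟩ ⟨hru1, le_of_lt hu1m⟩ (by rw [hu, hu1])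
    · right
      exact hmono.injOn (Set.mem_Ici.2 h.le) (Set.mem_Ici.2 hu2m.le) (by rw [hu, hu2])
  · intro u hru huu1
    have := hanti ⟨hru, by linarith⟩ ⟨hru1, le_of_lt hu1m⟩ huu1
    linarith [hu1 ▸ this]
  · intro u hu1u huu2
    rcases le_or_gt u m with h | h
    · have := hanti ⟨hru1, le_of_lt hu1m⟩ ⟨by linarith, h⟩ hu1u
      linarith [hu1 ▸ this]
    · have := hmono (Set.mem_Ici.2 h.le) (Set.mem_Ici.2 hu2m.le) huu2
      linarith [hu2 ▸ this]
  · intro u hu2u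
    have := hmono (Set.mem_Ici.2 hu2m.le) (Set.mem_Ici.2 (by linarith)) hu2u
    linarith [hu2 ▸ this]

set_option maxHeartbeats 1000000 in
/-- For N = 3, fixed β > 0 and δ ∈ ℝ, if −βδ > F*, then F(u) = −βδ has exactly
two solutions u₁ < u₂ in {u > 0 : P(u) > 0}, both greater than (1+√21)/4, and with
u = e^{β(θ+δ)}: E_r'(θ) > 0 if u < u₁, E_r'(θ) < 0 if u₁ < u < u₂, E_r'(θ) > 0 if u > u₂;
hence E_r is increasing for θ < θ₁, decreasing for θ₁ < θ < θ₂ and increasing for θ > θ₂,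
where θ_k = (log u_k)/β − δ. -/
theorem reward_N3_phase_transition_above_threshold (β δ : ℝ) (hβ : 0 < β)
    (h : Fstar < -β * δ) :
    ∃ u1 u2 : ℝ, u1 < u2 ∧
      (1 + Real.sqrt 21) / 4 < u1 ∧ (1 + Real.sqrt 21) / 4 < u2 ∧
      0 < u1 ∧ 0 < u2 ∧ 0 < Pfun u1 ∧ 0 < Pfun u2 ∧
      Ffun u1 = -β * δ ∧ Ffun u2 = -β * δ ∧
      (∀ u : ℝ, 0 < u → 0 < Pfun u → Ffun u = -β * δ → u = u1 ∨ u = u2) ∧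
      (∀ θ : ℝ, Real.exp (β * (θ + δ)) < u1 →
        0 < deriv (fun t : ℝ => Ereward 3 β δ t) θ) ∧
      (∀ θ : ℝ, u1 < Real.exp (β * (θ + δ)) → Real.exp (β * (θ + δ)) < u2 →
        deriv (fun t : ℝ => Ereward 3 β δ t) θ < 0) ∧
      (∀ θ : ℝ, u2 < Real.exp (β * (θ + δ)) →
        0 < deriv (fun t : ℝ => Ereward 3 β δ t) θ) ∧
      StrictMonoOn (fun t : ℝ => Ereward 3 β δ t) (Set.Iio (Real.log u1 / β - δ)) ∧
      StrictAntiOn (fun t : ℝ => Ereward 3 β δ t)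
        (Set.Ioo (Real.log u1 / β - δ) (Real.log u2 / β - δ)) ∧
      StrictMonoOn (fun t : ℝ => Ereward 3 β δ t) (Set.Ioi (Real.log u2 / β - δ)) := by
  have hrg := r_gt
  have hc1 : (1:ℝ) < -β*δ := lt_of_le_of_lt Fstar_ge_one h
  obtain ⟨u1, u2, h12, hr1, hr2, hF1, hF2, huniq, hsA, hsB, hsC⟩ := key_exists h
  have hu10 : (0:ℝ) < u1 := by linarith
  have hu20 : (0:ℝ) < u2 := by linarith
  have hP1 : 0 < Pfun u1 := P_pos_of_root_lt hr1
  have hP2 : 0 < Pfun u2 := P_pos_of_root_lt hr2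
  have hA : ∀ θ : ℝ, Real.exp (β * (θ + δ)) < u1 →
      0 < deriv (fun t : ℝ => Ereward 3 β δ t) θ := by
    intro θ hθ
    rw [(hasDeriv_Er β δ θ).deriv]
    set u : ℝ := Real.exp (β * (θ + δ)) with hud
    have hu0 : (0:ℝ) < u := Real.exp_pos _
    have hS : (0:ℝ) < u^2 + u + 1 := by positivity
    have hlog : Real.log u = β * (θ + δ) := Real.log_exp _
    clear_value u
    have hbt : β * θ = Real.log u + (-β*δ) := by rw [hlog]; ring
    apply div_pos _ (by positivity)
    have hG : 0 < (u + 1) * (5*u + 4) * (u^2 + u + 1) - β*θ*u*(4*u^2 - 2*u - 5) := by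
      by_cases hru : (1 + Real.sqrt 21)/4 < u
      · have hPu : (0:ℝ) < 4*u^2 - 2*u - 5 := P_pos_of_root_lt hru
        have hFu : -β*δ < Ffun u := hsA u hru hθ
        have hPos : (0:ℝ) < u*(4*u^2 - 2*u - 5) := by positivity
        have h2 : (Real.log u + (-β*δ)) * (u*(4*u^2 - 2*u - 5)) <
            (u + 1) * (5*u + 4) * (u^2 + u + 1) := by
          rw [← lt_div_iff₀ hPos]; unfold Ffun at hFu; linarith
        rw [hbt]; nlinarith [h2]
      · push_neg at hru
        have hPu : 4*u^2 - 2*u - 5 ≤ 0 := by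
          have hfac := P_factor u
          unfold Pfun at hfac
          nlinarith [sqrt21_lb]
        rcases le_or_gt (β*δ) (Real.log u) with hld | hld
        · have h1 : 0 ≤ β*θ*u := by
            have h0 : 0 ≤ β*θ := by rw [hbt]; linarith
            exact mul_nonneg h0 hu0.le
          have h2 : β*θ*u*(4*u^2 - 2*u - 5) ≤ 0 := mul_nonpos_of_nonneg_of_nonpos h1 hPu
          nlinarith
        · have hbd : β*δ ≤ -1 := by linarith
          have hlu : Real.log u < 0 := by linarith
          have hult : u < 1 := by
            by_contra hcon
            push_neg at hcon
            linarith [Real.log_nonneg hcon]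
          have hxe : u * (-Real.log u) ≤ 1/2 := by
            set x : ℝ := -Real.log u with hxd
            have hx0 : 0 < x := by linarith
            have hux : u = Real.exp (-x) := by rw [hxd, neg_neg, Real.exp_log hu0]
            clear_value x
            have h2x : 2*x ≤ Real.exp x := by
              have hh := Real.add_one_le_exp (x/2)
              have hee : Real.exp x = Real.exp (x/2) * Real.exp (x/2) := by
                rw [← Real.exp_add]; ring_nf
              nlinarith [Real.exp_pos (x/2), sq_nonneg (x - 2),
                mul_le_mul hh hh (by positivity) (Real.exp_pos (x/2)).le]
            rw [hux, Real.exp_neg]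
            rw [inv_mul_le_iff₀ (Real.exp_pos x)]
            nlinarith
          have hL : 0 < β*δ - Real.log u := by linarith
          have hLle : β*δ - Real.log u ≤ -Real.log u := by linarith
          have hLu : (β*δ - Real.log u) * u ≤ 1/2 := by
            calc (β*δ - Real.log u) * u ≤ (-Real.log u) * u :=
                  mul_le_mul_of_nonneg_right hLle hu0.le
              _ = u * (-Real.log u) := by ring
              _ ≤ 1/2 := hxe
          have hnP : -(4*u^2 - 2*u - 5) ≤ 7 := by nlinarith
          have hnP0 : 0 ≤ -(4*u^2 - 2*u - 5) := by linarith
          have hLu0 : 0 ≤ (β*δ - Real.log u) * u := mul_nonneg hL.le hu0.le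
          have hprod : ((β*δ - Real.log u) * u) * (-(4*u^2 - 2*u - 5)) ≤ 7/2 := by
            calc ((β*δ - Real.log u) * u) * (-(4*u^2 - 2*u - 5)) ≤ (1/2) * 7 :=
                  mul_le_mul hLu hnP hnP0 (by norm_num)
              _ = 7/2 := by norm_num
          have hQS : 4 ≤ (u + 1) * (5*u + 4) * (u^2 + u + 1) := by nlinarith
          have hbt2 : β*θ = -(β*δ - Real.log u) := by rw [hbt]; ring
          rw [hbt2]
          nlinarith [hprod]
    nlinarith [hG]
  have hB : ∀ θ : ℝ, u1 < Real.exp (β * (θ + δ)) → Real.exp (β * (θ + δ)) < u2 →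
      deriv (fun t : ℝ => Ereward 3 β δ t) θ < 0 := by
    intro θ h1 h2
    rw [(hasDeriv_Er β δ θ).deriv]
    set u : ℝ := Real.exp (β * (θ + δ)) with hud
    have hu0 : (0:ℝ) < u := Real.exp_pos _
    have hS : (0:ℝ) < u^2 + u + 1 := by positivity
    have hru : (1 + Real.sqrt 21)/4 < u := by linarith
    have hPu : (0:ℝ) < 4*u^2 - 2*u - 5 := P_pos_of_root_lt hru
    have hlog : Real.log u = β * (θ + δ) := Real.log_exp _
    clear_value u
    have hbt : β * θ = Real.log u + (-β*δ) := by rw [hlog]; ring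
    have hFu : Ffun u < -β*δ := hsB u h1 h2
    apply div_neg_of_neg_of_pos _ (by positivity)
    have hPos : (0:ℝ) < u*(4*u^2 - 2*u - 5) := by positivity
    have h3 : (u + 1) * (5*u + 4) * (u^2 + u + 1) <
        (Real.log u + (-β*δ)) * (u*(4*u^2 - 2*u - 5)) := by
      rw [← div_lt_iff₀ hPos]; unfold Ffun at hFu; linarith
    rw [hbt]; nlinarith [h3]
  have hC : ∀ θ : ℝ, u2 < Real.exp (β * (θ + δ)) →
      0 < deriv (fun t : ℝ => Ereward 3 β δ t) θ := by
    intro θ h2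
    rw [(hasDeriv_Er β δ θ).deriv]
    set u : ℝ := Real.exp (β * (θ + δ)) with hud
    have hu0 : (0:ℝ) < u := Real.exp_pos _
    have hS : (0:ℝ) < u^2 + u + 1 := by positivity
    have hru : (1 + Real.sqrt 21)/4 < u := by linarith
    have hPu : (0:ℝ) < 4*u^2 - 2*u - 5 := P_pos_of_root_lt hru
    have hlog : Real.log u = β * (θ + δ) := Real.log_exp _
    clear_value u
    have hbt : β * θ = Real.log u + (-β*δ) := by rw [hlog]; ring
    have hFu : -β*δ < Ffun u := hsC u h2
    apply div_pos _ (by positivity)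
    have hPos : (0:ℝ) < u*(4*u^2 - 2*u - 5) := by positivity
    have h3 : (Real.log u + (-β*δ)) * (u*(4*u^2 - 2*u - 5)) <
        (u + 1) * (5*u + 4) * (u^2 + u + 1) := by
      rw [← lt_div_iff₀ hPos]; unfold Ffun at hFu; linarith
    rw [hbt]; nlinarith [h3]
  have hcont : ∀ s : Set ℝ, ContinuousOn (fun t : ℝ => Ereward 3 β δ t) s :=
    fun s x _ => (hasDeriv_Er β δ x).continuousAt.continuousWithinAt
  have hexp_lt : ∀ (w θ : ℝ), 0 < w →
      (θ < Real.log w / β - δ ↔ Real.exp (β * (θ + δ)) < w) := by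
    intro w θ hw
    rw [← Real.lt_log_iff_exp_lt hw]
    rw [lt_sub_iff_add_lt, lt_div_iff₀ hβ]
    constructor <;> intro <;> nlinarith
  have hexp_gt : ∀ (w θ : ℝ), 0 < w →
      (Real.log w / β - δ < θ ↔ w < Real.exp (β * (θ + δ))) := by
    intro w θ hw
    rw [← Real.log_lt_iff_lt_exp hw]
    rw [sub_lt_iff_lt_add, div_lt_iff₀ hβ]
    constructor <;> intro <;> nlinarith
  refine ⟨u1, u2, h12, hr1, hr2, hu10, hu20, hP1, hP2, hF1, hF2, ?_, hA, hB, hC, ?_, ?_, ?_⟩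
  · intro u hu0 hPu hF
    exact huniq u (root_lt_of_P_pos hu0 hPu) hF
  · apply strictMonoOn_of_deriv_pos (convex_Iio _) (hcont _)
    intro x hx
    rw [interior_Iio] at hx
    exact hA x ((hexp_lt u1 x hu10).mp hx)
  · apply strictAntiOn_of_deriv_neg (convex_Ioo _ _) (hcont _)
    intro x hx
    rw [interior_Ioo] at hx
    exact hB x ((hexp_gt u1 x hu10).mp hx.1) ((hexp_lt u2 x hu20).mp hx.2)
  · apply strictMonoOn_of_deriv_pos (convex_Ioi _) (hcont _)
    intro x hx
    rw [interior_Ioi] at hx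
    exact hC x ((hexp_gt u2 x hu20).mp hx)
end
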